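/- Let X = (X_n)_{n∈ℤ} be a 1-dependent proper 4-coloring of ℤ whose law is invariant under all permutations of the 4 colors, under translations of ℤ, and under reflection of ℤ. For a word x_1...x_k of colors, write P(x_1...x_k) := P(X_1 = x_1, ..., X_k = x_k), and set α := 48·P(1212). Assume the length-4 cylinder probabilities satisfy P(1213) = (1 − α)/96, P(1231) = 1/96, and P(1234) = (1 + α)/96. Then the length-5 cylinder probabilities are uniquely determined: P(12134) = 1/288, P(12314) = 5/1152, P(12324) = 1/288, P(12341) = (1 + 4α)/384, P(12131) = (5 − 12α)/1152, P(12123) = 1/576, P(12132) = 1/384, P(12312) = 1/288, P(12321) = (1 − 2α)/192, and P(12121) = (6α − 1)/288. -/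

import Mathlib

open MeasureTheory ProbabilityTheory

/-- A process `X` indexed by the vertices of a graph `G` is *1-dependent* if its
restrictions to any two vertex sets at graph distance greater than 1 (i.e. containing
no common and no adjacent vertices) are independent. -/
def OneDependent {V E Ω : Type*} [MeasurableSpace E] (G : SimpleGraph V)
    [MeasurableSpace Ω] (μ : Measure Ω) (X : V → Ω → E) : Prop :=
  ∀ A B : Set V, (∀ a ∈ A, ∀ b ∈ B, a ≠ b ∧ ¬G.Adj a b) →
    IndepFun (fun ω (a : A) => X a.1 ω) (fun ω (b : B) => X b.1 ω) μ

/-- The bi-infinite path graph on `ℤ`: `n` is adjacent to `n + 1`. -/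
def zPath : SimpleGraph ℤ := SimpleGraph.fromRel (fun m n => n = m + 1)

/-- The cylinder probability `P(w) = P(X_1 = w_1, …, X_k = w_k)` of a word
`w` of colors (colors `1, 2, 3, 4` are represented by `0, 1, 2, 3 : Fin 4`). -/
noncomputable def cyl {Ω : Type*} [MeasurableSpace Ω] (μ : Measure Ω)
    (X : ℤ → Ω → Fin 4) (w : List (Fin 4)) : ℝ :=
  (μ {ω | ∀ i : Fin w.length, X ((i : ℕ) + 1 : ℤ) ω = w.get i}).toReal

lemma zPath_adj (u v : ℤ) : zPath.Adj u v ↔ u ≠ v ∧ (v = u + 1 ∨ u = v + 1) := by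
  simp [zPath, SimpleGraph.fromRel]

section Aux
variable {Ω : Type} [MeasurableSpace Ω] (μ : Measure Ω) (X : ℤ → Ω → Fin 4)

/-- The event that the process takes value `p.2` at position `p.1` for all `p` in `l`. -/
def evt (X : ℤ → Ω → Fin 4) (l : List (ℤ × Fin 4)) : Set Ω :=
  {ω | ∀ p ∈ l, X p.1 ω = p.2}

def pathSet (l : List (ℤ × Fin 4)) : Set (ℤ → Fin 4) := {f | ∀ p ∈ l, f p.1 = p.2}

lemma measurableSet_pathSet (l : List (ℤ × Fin 4)) : MeasurableSet (pathSet l) := by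
  induction l with
  | nil => simp [pathSet]
  | cons p l ih =>
    have : pathSet (p :: l) = ((fun f : ℤ → Fin 4 => f p.1) ⁻¹' {p.2}) ∩ pathSet l := by
      ext f; simp [pathSet]
    rw [this]
    exact ((measurable_pi_apply p.1) (measurableSet_singleton p.2)).inter ih

lemma evt_append (l₁ l₂ : List (ℤ × Fin 4)) : evt X (l₁ ++ l₂) = evt X l₁ ∩ evt X l₂ := by
  ext ω
  simp only [evt, Set.mem_setOf_eq, Set.mem_inter_iff, List.mem_append, or_imp, forall_and]

lemma evt_listPerm {l l' : List (ℤ × Fin 4)} (h : l.Perm l') : evt X l = evt X l' := by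
  ext ω
  simp only [evt, Set.mem_setOf_eq]
  exact ⟨fun hh p hp => hh p (h.mem_iff.mpr hp), fun hh p hp => hh p (h.mem_iff.mp hp)⟩

variable (hmeas : ∀ n, Measurable (X n))
include hmeas

lemma measurable_path : Measurable (fun ω (n : ℤ) => X n ω) :=
  measurable_pi_lambda _ fun n => hmeas n

omit hmeas in
lemma evt_eq_preimage (l : List (ℤ × Fin 4)) :
    evt X l = (fun ω (n : ℤ) => X n ω) ⁻¹' (pathSet l) := rfl

lemma measurableSet_evt (l : List (ℤ × Fin 4)) : MeasurableSet (evt X l) :=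
  (measurable_path X hmeas) (measurableSet_pathSet l)

lemma evt_apply_eq (Y : ℤ → Ω → Fin 4) (hY : ∀ n, Measurable (Y n))
    (h : Measure.map (fun ω (n : ℤ) => Y n ω) μ = Measure.map (fun ω (n : ℤ) => X n ω) μ)
    (l : List (ℤ × Fin 4)) : μ (evt Y l) = μ (evt X l) := by
  rw [evt_eq_preimage X l, evt_eq_preimage Y l,
    ← Measure.map_apply (measurable_path X hmeas) (measurableSet_pathSet l),
    ← Measure.map_apply (measurable_path Y hY) (measurableSet_pathSet l), h]

lemma P_shift1 (htrans : Measure.map (fun ω (n : ℤ) => X (n + 1) ω) μ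
      = Measure.map (fun ω (n : ℤ) => X n ω) μ) (l : List (ℤ × Fin 4)) :
    μ (evt X (l.map (fun p => (p.1 + 1, p.2)))) = μ (evt X l) := by
  have := evt_apply_eq μ X hmeas (fun n => X (n + 1)) (fun n => hmeas _) htrans l
  rw [← this]
  congr 1
  ext ω
  simp only [evt, Set.mem_setOf_eq, List.mem_map]
  constructor
  · intro h p hp; exact h (p.1 + 1, p.2) ⟨p, hp, rfl⟩
  · rintro h q ⟨p, hp, rfl⟩; exact h p hp

lemma P_shift (htrans : Measure.map (fun ω (n : ℤ) => X (n + 1) ω) μ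
      = Measure.map (fun ω (n : ℤ) => X n ω) μ) (m : ℕ) (l : List (ℤ × Fin 4)) :
    μ (evt X (l.map (fun p => (p.1 + m, p.2)))) = μ (evt X l) := by
  induction m with
  | zero => simp
  | succ k ih =>
    have h2 := P_shift1 μ X hmeas htrans (l.map (fun p => (p.1 + k, p.2)))
    rw [List.map_map] at h2
    have hl : (l.map (fun p : ℤ × Fin 4 => (p.1 + (↑(k+1) : ℤ), p.2)))
        = l.map ((fun p : ℤ × Fin 4 => (p.1 + 1, p.2)) ∘ fun p : ℤ × Fin 4 => (p.1 + (k : ℤ), p.2)) := by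
      apply List.map_congr_left
      intro p _
      simp only [Function.comp]
      congr 1
      push_cast
      ring
    rw [hl, h2, ih]

lemma P_reflect (hrefl : Measure.map (fun ω (n : ℤ) => X (-n) ω) μ
      = Measure.map (fun ω (n : ℤ) => X n ω) μ) (l : List (ℤ × Fin 4)) :
    μ (evt X (l.map (fun p => (-p.1, p.2)))) = μ (evt X l) := by
  have := evt_apply_eq μ X hmeas (fun n => X (-n)) (fun n => hmeas _) hrefl l
  rw [← this]
  congr 1
  ext ω
  simp only [evt, Set.mem_setOf_eq, List.mem_map]
  constructor
  · intro h p hp; exact h (-p.1, p.2) ⟨p, hp, rfl⟩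
  · rintro h q ⟨p, hp, rfl⟩; exact h p hp

lemma P_perm (hcolor : ∀ σ : Equiv.Perm (Fin 4),
      Measure.map (fun ω (n : ℤ) => σ (X n ω)) μ = Measure.map (fun ω (n : ℤ) => X n ω) μ)
    (σ : Equiv.Perm (Fin 4)) (l : List (ℤ × Fin 4)) :
    μ (evt X (l.map (fun p => (p.1, σ p.2)))) = μ (evt X l) := by
  have := evt_apply_eq μ X hmeas (fun n ω => σ.symm (X n ω))
    (fun n => (Measurable.of_discrete (f := σ.symm)).comp (hmeas n)) (hcolor σ.symm) l
  rw [← this]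
  congr 1
  ext ω
  simp only [evt, Set.mem_setOf_eq, List.mem_map]
  constructor
  · intro h p hp
    have h2 := h (p.1, σ p.2) ⟨p, hp, rfl⟩
    simp only at h2
    rw [h2]; simp
  · rintro h q ⟨p, hp, rfl⟩
    have h2 := h p hp
    simp only
    rw [← h2]; simp

lemma P_decomp (m : ℤ) (l : List (ℤ × Fin 4)) :
    μ (evt X l) = ∑ c : Fin 4, μ (evt X ((m, c) :: l)) := by
  have hU : evt X l = ⋃ c : Fin 4, evt X ((m, c) :: l) := by
    ext ω
    simp only [evt, Set.mem_iUnion, Set.mem_setOf_eq, List.mem_cons]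
    constructor
    · intro h
      refine ⟨X m ω, fun p hp => ?_⟩
      rcases hp with h1 | h2
      · rw [h1]
      · exact h p h2
    · rintro ⟨c, hc⟩ p hp
      exact hc p (Or.inr hp)
  rw [hU, measure_iUnion _ (fun c => measurableSet_evt X hmeas _)]
  · exact tsum_fintype _
  · intro c d hcd
    simp only [Set.disjoint_left]
    intro ω h1 h2
    have e1 : X m ω = c := h1 (m, c) List.mem_cons_self
    have e2 : X m ω = d := h2 (m, d) List.mem_cons_self
    exact hcd (e1 ▸ e2 ▸ rfl)

omit hmeas in
lemma P_null (hproper : ∀ u v : ℤ, zPath.Adj u v → μ {ω | X u ω = X v ω} = 0)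
    {u v : ℤ} {c : Fin 4} {l : List (ℤ × Fin 4)} (hu : (u, c) ∈ l) (hv : (v, c) ∈ l)
    (hadj : zPath.Adj u v) : μ (evt X l) = 0 := by
  refine measure_mono_null ?_ (hproper u v hadj)
  intro ω hω
  have h1 := hω (u, c) hu
  have h2 := hω (v, c) hv
  simp only [Set.mem_setOf_eq]
  rw [h1, h2]

omit hmeas in
lemma P_indep (hdep : OneDependent zPath μ X)
    (A B : Set ℤ) (hAB : ∀ a ∈ A, ∀ b ∈ B, a ≠ b ∧ ¬zPath.Adj a b)
    (lA lB : List (ℤ × Fin 4)) (hA : ∀ p ∈ lA, p.1 ∈ A) (hB : ∀ p ∈ lB, p.1 ∈ B) :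
    μ (evt X lA ∩ evt X lB) = μ (evt X lA) * μ (evt X lB) := by
  classical
  have hind := hdep A B hAB
  set SA : Set (A → Fin 4) := {g | ∀ p ∈ lA, ∀ h : p.1 ∈ A, g ⟨p.1, h⟩ = p.2} with hSA
  set SB : Set (B → Fin 4) := {g | ∀ p ∈ lB, ∀ h : p.1 ∈ B, g ⟨p.1, h⟩ = p.2} with hSB
  have measS : ∀ (C : Set ℤ) (lC : List (ℤ × Fin 4)),
      MeasurableSet {g : C → Fin 4 | ∀ p ∈ lC, ∀ h : p.1 ∈ C, g ⟨p.1, h⟩ = p.2} := by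
    intro C lC
    induction lC with
    | nil => simp
    | cons p l ih =>
      have : {g : C → Fin 4 | ∀ q ∈ p :: l, ∀ h : q.1 ∈ C, g ⟨q.1, h⟩ = q.2}
          = {g : C → Fin 4 | ∀ h : p.1 ∈ C, g ⟨p.1, h⟩ = p.2}
            ∩ {g : C → Fin 4 | ∀ q ∈ l, ∀ h : q.1 ∈ C, g ⟨q.1, h⟩ = q.2} := by
        ext g
        simp only [Set.mem_inter_iff, Set.mem_setOf_eq, List.mem_cons]
        constructor
        · intro h
          exact ⟨h p (Or.inl rfl), fun q hq => h q (Or.inr hq)⟩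
        · rintro ⟨h1, h2⟩ q (rfl | hq)
          · exact h1
          · exact h2 q hq
      rw [this]
      refine MeasurableSet.inter ?_ ih
      by_cases hp : p.1 ∈ C
      · have : {g : C → Fin 4 | ∀ h : p.1 ∈ C, g ⟨p.1, h⟩ = p.2}
            = (fun g : C → Fin 4 => g ⟨p.1, hp⟩) ⁻¹' {p.2} := by
          ext g
          simp only [Set.mem_setOf_eq, Set.mem_preimage, Set.mem_singleton_iff]
          exact ⟨fun h => h hp, fun h _ => h⟩
        rw [this]
        exact (measurable_pi_apply _) (measurableSet_singleton _)
      · have : {g : C → Fin 4 | ∀ h : p.1 ∈ C, g ⟨p.1, h⟩ = p.2} = Set.univ := by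
          ext g
          simp only [Set.mem_setOf_eq, Set.mem_univ, iff_true]
          exact fun h => absurd h hp
        rw [this]
        exact MeasurableSet.univ
  have hpreA : evt X lA = (fun ω (a : A) => X a.1 ω) ⁻¹' SA := by
    ext ω
    simp only [evt, Set.mem_preimage, hSA, Set.mem_setOf_eq]
    exact ⟨fun h p hp _ => h p hp, fun h p hp => h p hp (hA p hp)⟩
  have hpreB : evt X lB = (fun ω (b : B) => X b.1 ω) ⁻¹' SB := by
    ext ω
    simp only [evt, Set.mem_preimage, hSB, Set.mem_setOf_eq]
    exact ⟨fun h p hp _ => h p hp, fun h p hp => h p hp (hB p hp)⟩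
  rw [hpreA, hpreB]
  exact hind.measure_inter_preimage_eq_mul SA SB (measS A lA) (measS B lB)

variable [IsProbabilityMeasure μ]

lemma Pr_decomp (m : ℤ) (l : List (ℤ × Fin 4)) :
    (μ (evt X l)).toReal = (μ (evt X ((m, 0) :: l))).toReal + (μ (evt X ((m, 1) :: l))).toReal
      + (μ (evt X ((m, 2) :: l))).toReal + (μ (evt X ((m, 3) :: l))).toReal := by
  have h := P_decomp μ X hmeas m l
  rw [Fin.sum_univ_four] at h
  rw [h, ENNReal.toReal_add (ENNReal.add_ne_top.mpr ⟨ENNReal.add_ne_top.mpr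
      ⟨measure_ne_top μ _, measure_ne_top μ _⟩, measure_ne_top μ _⟩) (measure_ne_top μ _),
    ENNReal.toReal_add (ENNReal.add_ne_top.mpr ⟨measure_ne_top μ _, measure_ne_top μ _⟩)
      (measure_ne_top μ _),
    ENNReal.toReal_add (measure_ne_top μ _) (measure_ne_top μ _)]

omit hmeas in
lemma Pr_indep_split (hdep : OneDependent zPath μ X)
    (A B : Set ℤ) (hAB : ∀ a ∈ A, ∀ b ∈ B, a ≠ b ∧ ¬zPath.Adj a b)
    (lA lB : List (ℤ × Fin 4)) (hA : ∀ p ∈ lA, p.1 ∈ A) (hB : ∀ p ∈ lB, p.1 ∈ B) :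
    (μ (evt X (lA ++ lB))).toReal = (μ (evt X lA)).toReal * (μ (evt X lB)).toReal := by
  rw [evt_append, P_indep μ X hdep A B hAB lA lB hA hB, ENNReal.toReal_mul]

end Aux

section Bridge
variable {Ω : Type} [MeasurableSpace Ω] (μ : Measure Ω) (X : ℤ → Ω → Fin 4)

lemma cyl5 (a b c d e : Fin 4) :
    cyl μ X ([a,b,c,d,e]) = (μ (evt X ([(1,a),(2,b),(3,c),(4,d),(5,e)]))).toReal := by
  have h : {ω | ∀ i : Fin (([a,b,c,d,e] : List (Fin 4)).length),
      X ((i : ℕ) + 1 : ℤ) ω = ([a,b,c,d,e] : List (Fin 4)).get i}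
      = evt X ([(1,a),(2,b),(3,c),(4,d),(5,e)]) := by
    ext ω
    simp only [evt, Set.mem_setOf_eq, List.forall_mem_cons, List.forall_mem_nil, and_true]
    constructor
    · intro h
      refine ⟨?_, ?_, ?_, ?_, ?_⟩
      · simpa using h ⟨0, by norm_num⟩
      · simpa using h ⟨1, by norm_num⟩
      · simpa using h ⟨2, by norm_num⟩
      · simpa using h ⟨3, by norm_num⟩
      · simpa using h ⟨4, by norm_num⟩
    · rintro ⟨h1, h2, h3, h4, h5, -⟩ ⟨i, hi⟩
      simp only [List.length] at hi
      interval_cases i <;> simpa using ‹_›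
  unfold cyl
  rw [h]

lemma cyl4 (a b c d : Fin 4) :
    cyl μ X ([a,b,c,d]) = (μ (evt X ([(1,a),(2,b),(3,c),(4,d)]))).toReal := by
  have h : {ω | ∀ i : Fin (([a,b,c,d] : List (Fin 4)).length),
      X ((i : ℕ) + 1 : ℤ) ω = ([a,b,c,d] : List (Fin 4)).get i}
      = evt X ([(1,a),(2,b),(3,c),(4,d)]) := by
    ext ω
    simp only [evt, Set.mem_setOf_eq, List.forall_mem_cons, List.forall_mem_nil, and_true]
    constructor
    · intro h
      refine ⟨?_, ?_, ?_, ?_⟩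
      · simpa using h ⟨0, by norm_num⟩
      · simpa using h ⟨1, by norm_num⟩
      · simpa using h ⟨2, by norm_num⟩
      · simpa using h ⟨3, by norm_num⟩
    · rintro ⟨h1, h2, h3, h4, -⟩ ⟨i, hi⟩
      simp only [List.length] at hi
      interval_cases i <;> simpa using ‹_›
  unfold cyl
  rw [h]

end Bridge

set_option maxHeartbeats 4000000 in
/-- For a 1-dependent proper 4-coloring of `ℤ` invariant under color
permutations, translations and reflection, with `α := 48 P(1212)` and the length-4
cylinder probabilities `P(1213) = (1-α)/96`, `P(1231) = 1/96`, `P(1234) = (1+α)/96`,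
the length-5 cylinder probabilities are uniquely determined as stated.
(Colors `1,2,3,4` are represented by `0,1,2,3 : Fin 4`.) -/
theorem length_five_cylinders
    (Ω : Type) [MeasurableSpace Ω] (μ : Measure Ω) [IsProbabilityMeasure μ]
    (X : ℤ → Ω → Fin 4) (hmeas : ∀ n, Measurable (X n))
    (hproper : ∀ u v : ℤ, zPath.Adj u v → μ {ω | X u ω = X v ω} = 0)
    (hdep : OneDependent zPath μ X)
    (hcolor : ∀ σ : Equiv.Perm (Fin 4),
      Measure.map (fun ω (n : ℤ) => σ (X n ω)) μ
        = Measure.map (fun ω (n : ℤ) => X n ω) μ)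
    (htrans : Measure.map (fun ω (n : ℤ) => X (n + 1) ω) μ
        = Measure.map (fun ω (n : ℤ) => X n ω) μ)
    (hrefl : Measure.map (fun ω (n : ℤ) => X (-n) ω) μ
        = Measure.map (fun ω (n : ℤ) => X n ω) μ)
    (α : ℝ) (hα : α = 48 * cyl μ X ([0, 1, 0, 1] : List (Fin 4)))
    (h1213 : cyl μ X ([0, 1, 0, 2] : List (Fin 4)) = (1 - α) / 96)
    (h1231 : cyl μ X ([0, 1, 2, 0] : List (Fin 4)) = 1 / 96)
    (h1234 : cyl μ X ([0, 1, 2, 3] : List (Fin 4)) = (1 + α) / 96) :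
    cyl μ X ([0, 1, 0, 2, 3] : List (Fin 4)) = 1 / 288 ∧
    cyl μ X ([0, 1, 2, 0, 3] : List (Fin 4)) = 5 / 1152 ∧
    cyl μ X ([0, 1, 2, 1, 3] : List (Fin 4)) = 1 / 288 ∧
    cyl μ X ([0, 1, 2, 3, 0] : List (Fin 4)) = (1 + 4 * α) / 384 ∧
    cyl μ X ([0, 1, 0, 2, 0] : List (Fin 4)) = (5 - 12 * α) / 1152 ∧
    cyl μ X ([0, 1, 0, 1, 2] : List (Fin 4)) = 1 / 576 ∧
    cyl μ X ([0, 1, 0, 2, 1] : List (Fin 4)) = 1 / 384 ∧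
    cyl μ X ([0, 1, 2, 0, 1] : List (Fin 4)) = 1 / 288 ∧
    cyl μ X ([0, 1, 2, 1, 0] : List (Fin 4)) = (1 - 2 * α) / 192 ∧
    cyl μ X ([0, 1, 0, 1, 0] : List (Fin 4)) = (6 * α - 1) / 288 := by
  classical
  have permR : ∀ (σ : Equiv.Perm (Fin 4)) (l l' : List (ℤ × Fin 4)),
      List.map (fun p => (p.1, σ p.2)) l = l' →
      (μ (evt X l')).toReal = (μ (evt X l)).toReal := by
    intro σ l l' h
    rw [← h, P_perm μ X hmeas hcolor σ l]
  have shiftR : ∀ (m : ℕ) (l l' : List (ℤ × Fin 4)),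
      List.map (fun p => (p.1 + (m : ℤ), p.2)) l = l' →
      (μ (evt X l')).toReal = (μ (evt X l)).toReal := by
    intro m l l' h
    rw [← h, P_shift μ X hmeas htrans m l]
  have reflR : ∀ (l l' : List (ℤ × Fin 4)),
      List.map (fun p => (-p.1, p.2)) l = l' →
      (μ (evt X l')).toReal = (μ (evt X l)).toReal := by
    intro l l' h
    rw [← h, P_reflect μ X hmeas hrefl l]
  have permLR : ∀ (l l' : List (ℤ × Fin 4)), l.Perm l' →
      (μ (evt X l)).toReal = (μ (evt X l')).toReal := by
    intro l l' h
    rw [evt_listPerm X h]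
  have decompR := Pr_decomp μ X hmeas
  have nullR : ∀ (u v : ℤ) (c : Fin 4) (l : List (ℤ × Fin 4)), (u, c) ∈ l → (v, c) ∈ l →
      zPath.Adj u v → (μ (evt X l)).toReal = 0 := by
    intro u v c l hu hv hadj
    rw [P_null μ X hproper hu hv hadj, ENNReal.toReal_zero]
  have adj12 : zPath.Adj 1 2 := by rw [zPath_adj]; omega
  have adj23 : zPath.Adj 2 3 := by rw [zPath_adj]; omega
  have adj34 : zPath.Adj 3 4 := by rw [zPath_adj]; omega
  have adj45 : zPath.Adj 4 5 := by rw [zPath_adj]; omega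
  have hAB1 : ∀ a ∈ {n : ℤ | n ≤ 1}, ∀ b ∈ {n : ℤ | 3 ≤ n}, a ≠ b ∧ ¬zPath.Adj a b := by
    intro a ha b hb
    simp only [Set.mem_setOf_eq] at ha hb
    rw [zPath_adj]
    omega
  have hAB2 : ∀ a ∈ {n : ℤ | n ≤ 2}, ∀ b ∈ {n : ℤ | 4 ≤ n}, a ≠ b ∧ ¬zPath.Adj a b := by
    intro a ha b hb
    simp only [Set.mem_setOf_eq] at ha hb
    rw [zPath_adj]
    omega
  have hAB3 : ∀ a ∈ {n : ℤ | n ≤ 3}, ∀ b ∈ {n : ℤ | 5 ≤ n}, a ≠ b ∧ ¬zPath.Adj a b := by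
    intro a ha b hb
    simp only [Set.mem_setOf_eq] at ha hb
    rw [zPath_adj]
    omega
  have splitR1 : ∀ lA lB : List (ℤ × Fin 4), (∀ p ∈ lA, p.1 ≤ 1) → (∀ p ∈ lB, 3 ≤ p.1) →
      (μ (evt X (lA ++ lB))).toReal = (μ (evt X lA)).toReal * (μ (evt X lB)).toReal := by
    intro lA lB hA hB
    exact Pr_indep_split μ X hdep _ _ hAB1 lA lB (fun p hp => hA p hp) (fun p hp => hB p hp)
  have splitR2 : ∀ lA lB : List (ℤ × Fin 4), (∀ p ∈ lA, p.1 ≤ 2) → (∀ p ∈ lB, 4 ≤ p.1) →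
      (μ (evt X (lA ++ lB))).toReal = (μ (evt X lA)).toReal * (μ (evt X lB)).toReal := by
    intro lA lB hA hB
    exact Pr_indep_split μ X hdep _ _ hAB2 lA lB (fun p hp => hA p hp) (fun p hp => hB p hp)
  have splitR3 : ∀ lA lB : List (ℤ × Fin 4), (∀ p ∈ lA, p.1 ≤ 3) → (∀ p ∈ lB, 5 ≤ p.1) →
      (μ (evt X (lA ++ lB))).toReal = (μ (evt X lA)).toReal * (μ (evt X lB)).toReal := by
    intro lA lB hA hB
    exact Pr_indep_split μ X hdep _ _ hAB3 lA lB (fun p hp => hA p hp) (fun p hp => hB p hp)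
  have hPr_nil : (μ (evt X ([] : List (ℤ × Fin 4)))).toReal = 1 := by
    have h : evt X ([] : List (ℤ × Fin 4)) = Set.univ := by
      ext ω; simp [evt]
    rw [h, measure_univ, ENNReal.toReal_one]
  have hdec1 := decompR 1 ([] : List (ℤ × Fin 4))
  have e11 := permR (Equiv.swap 0 1) ([(1,0)]) ([(1,1)]) (by decide)
  have e12 := permR (Equiv.swap 0 2) ([(1,0)]) ([(1,2)]) (by decide)
  have e13 := permR (Equiv.swap 0 3) ([(1,0)]) ([(1,3)]) (by decide)
  have hP1 : (μ (evt X ([(1,0)] : List (ℤ × Fin 4)))).toReal = 1/4 := by linarith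
  have h50 : (μ (evt X ([(5,0)] : List (ℤ × Fin 4)))).toReal = 1/4 := by
    have hs := shiftR 4 ([(1,0)]) ([(5,0)]) (by decide)
    linarith
  have h51 : (μ (evt X ([(5,1)] : List (ℤ × Fin 4)))).toReal = 1/4 := by
    have hs := shiftR 4 ([(1,1)]) ([(5,1)]) (by decide)
    have hp := permR (Equiv.swap 0 1) ([(1,0)]) ([(1,1)]) (by decide)
    linarith
  have h52 : (μ (evt X ([(5,2)] : List (ℤ × Fin 4)))).toReal = 1/4 := by
    have hs := shiftR 4 ([(1,2)]) ([(5,2)]) (by decide)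
    have hp := permR (Equiv.swap 0 2) ([(1,0)]) ([(1,2)]) (by decide)
    linarith
  have h30 : (μ (evt X ([(3,0)] : List (ℤ × Fin 4)))).toReal = 1/4 := by
    have hs := shiftR 2 ([(1,0)]) ([(3,0)]) (by decide)
    linarith
  have h31 : (μ (evt X ([(3,1)] : List (ℤ × Fin 4)))).toReal = 1/4 := by
    have hs := shiftR 2 ([(1,1)]) ([(3,1)]) (by decide)
    have hp := permR (Equiv.swap 0 1) ([(1,0)]) ([(1,1)]) (by decide)
    linarith
  have hdec2 := decompR 2 ([(1,0)] : List (ℤ × Fin 4))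
  have n20 := nullR 1 2 0 ([(2,0), (1,0)]) (by decide) (by decide) adj12
  have e22 := permR (Equiv.swap 1 2) ([(2,1), (1,0)]) ([(2,2), (1,0)]) (by decide)
  have e23 := permR (Equiv.swap 1 3) ([(2,1), (1,0)]) ([(2,3), (1,0)]) (by decide)
  have hP12r : (μ (evt X ([(2,1), (1,0)] : List (ℤ × Fin 4)))).toReal = 1/12 := by linarith
  have o12 := permLR ([(1,0), (2,1)]) ([(2,1), (1,0)]) (by decide)
  have hP12 : (μ (evt X ([(1,0), (2,1)] : List (ℤ × Fin 4)))).toReal = 1/12 := by linarith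
  have sp121 := splitR1 ([(1,0)]) ([(3,0)]) (by decide) (by decide)
  have o121 := permLR ([(1,0), (3,0)]) ([(1,0)] ++ [(3,0)]) (by decide)
  have hgap : (μ (evt X ([(1,0), (3,0)] : List (ℤ × Fin 4)))).toReal = 1/16 := by rw [o121, sp121, hP1, h30]; norm_num
  have hdec3 := decompR 2 ([(1,0), (3,0)] : List (ℤ × Fin 4))
  have n30 := nullR 1 2 0 ([(2,0), (1,0), (3,0)]) (by decide) (by decide) adj12
  have e32 := permR (Equiv.swap 1 2) ([(2,1), (1,0), (3,0)]) ([(2,2), (1,0), (3,0)]) (by decide)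
  have e33 := permR (Equiv.swap 1 3) ([(2,1), (1,0), (3,0)]) ([(2,3), (1,0), (3,0)]) (by decide)
  have hP121r : (μ (evt X ([(2,1), (1,0), (3,0)] : List (ℤ × Fin 4)))).toReal = 1/48 := by linarith
  have o121c := permLR ([(1,0), (2,1), (3,0)]) ([(2,1), (1,0), (3,0)]) (by decide)
  have hP121 : (μ (evt X ([(1,0), (2,1), (3,0)] : List (ℤ × Fin 4)))).toReal = 1/48 := by linarith
  have sp123 := splitR1 ([(1,0)]) ([(3,1)]) (by decide) (by decide)
  have o123 := permLR ([(1,0), (3,1)]) ([(1,0)] ++ [(3,1)]) (by decide)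
  have hgap2 : (μ (evt X ([(1,0), (3,1)] : List (ℤ × Fin 4)))).toReal = 1/16 := by rw [o123, sp123, hP1, h31]; norm_num
  have hdec4 := decompR 2 ([(1,0), (3,1)] : List (ℤ × Fin 4))
  have n40 := nullR 1 2 0 ([(2,0), (1,0), (3,1)]) (by decide) (by decide) adj12
  have n41 := nullR 2 3 1 ([(2,1), (1,0), (3,1)]) (by decide) (by decide) adj23
  have e42 := permR (Equiv.swap 1 2) ([(1,0), (2,1), (3,2)]) ([(1,0), (2,2), (3,1)]) (by decide)
  have o42 := permLR ([(2,2), (1,0), (3,1)]) ([(1,0), (2,2), (3,1)]) (by decide)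
  have e43 := permR ((Equiv.swap 1 2).trans (Equiv.swap 2 3)) ([(1,0), (2,1), (3,2)]) ([(1,0), (2,3), (3,1)]) (by decide)
  have o43 := permLR ([(2,3), (1,0), (3,1)]) ([(1,0), (2,3), (3,1)]) (by decide)
  have hP123 : (μ (evt X ([(1,0), (2,1), (3,2)] : List (ℤ × Fin 4)))).toReal = 1/32 := by linarith
  have h4501 : (μ (evt X ([(4,0), (5,1)] : List (ℤ × Fin 4)))).toReal = 1/12 := by
    have hs := shiftR 3 ([(1,0), (2,1)]) ([(4,0), (5,1)]) (by decide)
    linarith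
  have h4502 : (μ (evt X ([(4,0), (5,2)] : List (ℤ × Fin 4)))).toReal = 1/12 := by
    have hs := shiftR 3 ([(1,0), (2,2)]) ([(4,0), (5,2)]) (by decide)
    have hp := permR (Equiv.swap 1 2) ([(1,0), (2,1)]) ([(1,0), (2,2)]) (by decide)
    linarith
  have h4510 : (μ (evt X ([(4,1), (5,0)] : List (ℤ × Fin 4)))).toReal = 1/12 := by
    have hs := shiftR 3 ([(1,1), (2,0)]) ([(4,1), (5,0)]) (by decide)
    have hp := permR (Equiv.swap 0 1) ([(1,0), (2,1)]) ([(1,1), (2,0)]) (by decide)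
    linarith
  have h4512 : (μ (evt X ([(4,1), (5,2)] : List (ℤ × Fin 4)))).toReal = 1/12 := by
    have hs := shiftR 3 ([(1,1), (2,2)]) ([(4,1), (5,2)]) (by decide)
    have hp := permR ((Equiv.swap 0 1).trans (Equiv.swap 0 2)) ([(1,0), (2,1)]) ([(1,1), (2,2)]) (by decide)
    linarith
  have h4520 : (μ (evt X ([(4,2), (5,0)] : List (ℤ × Fin 4)))).toReal = 1/12 := by
    have hs := shiftR 3 ([(1,2), (2,0)]) ([(4,2), (5,0)]) (by decide)
    have hp := permR ((Equiv.swap 0 2).trans (Equiv.swap 0 1)) ([(1,0), (2,1)]) ([(1,2), (2,0)]) (by decide)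
    linarith
  have h4523 : (μ (evt X ([(4,2), (5,3)] : List (ℤ × Fin 4)))).toReal = 1/12 := by
    have hs := shiftR 3 ([(1,2), (2,3)]) ([(4,2), (5,3)]) (by decide)
    have hp := permR ((Equiv.swap 0 2).trans (Equiv.swap 1 3)) ([(1,0), (2,1)]) ([(1,2), (2,3)]) (by decide)
    linarith
  have hrGD : (μ (evt X ([(1,0), (2,1), (3,2), (4,0), (5,2)] : List (ℤ × Fin 4)))).toReal = (μ (evt X ([(1,0), (2,1), (3,0), (4,2), (5,1)] : List (ℤ × Fin 4)))).toReal := by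
    have r1 := reflR ([(-1,0), (-2,1), (-3,2), (-4,0), (-5,2)]) ([(1,0), (2,1), (3,2), (4,0), (5,2)]) (by decide)
    have r2 := shiftR 6 ([(-1,0), (-2,1), (-3,2), (-4,0), (-5,2)]) ([(5,0), (4,1), (3,2), (2,0), (1,2)]) (by decide)
    have r3 := permLR ([(5,0), (4,1), (3,2), (2,0), (1,2)]) ([(1,2), (2,0), (3,2), (4,1), (5,0)]) (by decide)
    have r4 := permR ((Equiv.swap 0 2).trans (Equiv.swap 0 1)) ([(1,0), (2,1), (3,0), (4,2), (5,1)]) ([(1,2), (2,0), (3,2), (4,1), (5,0)]) (by decide)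
    linarith
  have hrNE : (μ (evt X ([(1,0), (2,1), (3,2), (4,3), (5,2)] : List (ℤ × Fin 4)))).toReal = (μ (evt X ([(1,0), (2,1), (3,0), (4,2), (5,3)] : List (ℤ × Fin 4)))).toReal := by
    have r1 := reflR ([(-1,0), (-2,1), (-3,2), (-4,3), (-5,2)]) ([(1,0), (2,1), (3,2), (4,3), (5,2)]) (by decide)
    have r2 := shiftR 6 ([(-1,0), (-2,1), (-3,2), (-4,3), (-5,2)]) ([(5,0), (4,1), (3,2), (2,3), (1,2)]) (by decide)
    have r3 := permLR ([(5,0), (4,1), (3,2), (2,3), (1,2)]) ([(1,2), (2,3), (3,2), (4,1), (5,0)]) (by decide)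
    have r4 := permR (((Equiv.swap 0 2).trans (Equiv.swap 0 1)).trans (Equiv.swap 0 3)) ([(1,0), (2,1), (3,0), (4,2), (5,3)]) ([(1,2), (2,3), (3,2), (4,1), (5,0)]) (by decide)
    linarith
  have hrJB : (μ (evt X ([(1,0), (2,1), (3,2), (4,1), (5,2)] : List (ℤ × Fin 4)))).toReal = (μ (evt X ([(1,0), (2,1), (3,0), (4,1), (5,2)] : List (ℤ × Fin 4)))).toReal := by
    have r1 := reflR ([(-1,0), (-2,1), (-3,2), (-4,1), (-5,2)]) ([(1,0), (2,1), (3,2), (4,1), (5,2)]) (by decide)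
    have r2 := shiftR 6 ([(-1,0), (-2,1), (-3,2), (-4,1), (-5,2)]) ([(5,0), (4,1), (3,2), (2,1), (1,2)]) (by decide)
    have r3 := permLR ([(5,0), (4,1), (3,2), (2,1), (1,2)]) ([(1,2), (2,1), (3,2), (4,1), (5,0)]) (by decide)
    have r4 := permR (Equiv.swap 0 2) ([(1,0), (2,1), (3,0), (4,1), (5,2)]) ([(1,2), (2,1), (3,2), (4,1), (5,0)]) (by decide)
    linarith
  -- equation d
  have sp_d := splitR3 ([(1,0), (2,1), (3,0)]) ([(5,1)]) (by decide) (by decide)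
  have o_d := permLR ([(1,0), (2,1), (3,0), (5,1)]) ([(1,0), (2,1), (3,0)] ++ [(5,1)]) (by decide)
  have bs_d : (μ (evt X ([(1,0), (2,1), (3,0), (5,1)] : List (ℤ × Fin 4)))).toReal = 1/48 * (1/4) := by rw [o_d, sp_d, hP121, h51]
  have dec_d := decompR 4 ([(1,0), (2,1), (3,0), (5,1)] : List (ℤ × Fin 4))
  have t_d_0 : (μ (evt X ([(4,0), (1,0), (2,1), (3,0), (5,1)] : List (ℤ × Fin 4)))).toReal = 0 := nullR 3 4 0 ([(4,0), (1,0), (2,1), (3,0), (5,1)]) (by decide) (by decide) adj34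
  have t_d_1 : (μ (evt X ([(4,1), (1,0), (2,1), (3,0), (5,1)] : List (ℤ × Fin 4)))).toReal = 0 := nullR 4 5 1 ([(4,1), (1,0), (2,1), (3,0), (5,1)]) (by decide) (by decide) adj45
  have t_d_2 := permLR ([(4,2), (1,0), (2,1), (3,0), (5,1)]) ([(1,0), (2,1), (3,0), (4,2), (5,1)]) (by decide)
  have t_d_3 : (μ (evt X ([(4,3), (1,0), (2,1), (3,0), (5,1)] : List (ℤ × Fin 4)))).toReal = (μ (evt X ([(1,0), (2,1), (3,0), (4,2), (5,1)] : List (ℤ × Fin 4)))).toReal := by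
    have q1 := permLR ([(4,3), (1,0), (2,1), (3,0), (5,1)]) ([(1,0), (2,1), (3,0), (4,3), (5,1)]) (by decide)
    have q2 := permR (Equiv.swap 2 3) ([(1,0), (2,1), (3,0), (4,2), (5,1)]) ([(1,0), (2,1), (3,0), (4,3), (5,1)]) (by decide)
    linarith
  have val_d : (μ (evt X ([(1,0), (2,1), (3,0), (4,2), (5,1)] : List (ℤ × Fin 4)))).toReal = 1/384 := by linarith [bs_d, dec_d, t_d_0, t_d_1, t_d_2, t_d_3]
  -- equation e
  have sp_e := splitR2 ([(1,0), (2,1)]) ([(4,2), (5,3)]) (by decide) (by decide)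
  have o_e := permLR ([(1,0), (2,1), (4,2), (5,3)]) ([(1,0), (2,1)] ++ [(4,2), (5,3)]) (by decide)
  have bs_e : (μ (evt X ([(1,0), (2,1), (4,2), (5,3)] : List (ℤ × Fin 4)))).toReal = 1/12 * (1/12) := by rw [o_e, sp_e, hP12, h4523]
  have dec_e := decompR 3 ([(1,0), (2,1), (4,2), (5,3)] : List (ℤ × Fin 4))
  have t_e_0 := permLR ([(3,0), (1,0), (2,1), (4,2), (5,3)]) ([(1,0), (2,1), (3,0), (4,2), (5,3)]) (by decide)
  have t_e_1 : (μ (evt X ([(3,1), (1,0), (2,1), (4,2), (5,3)] : List (ℤ × Fin 4)))).toReal = 0 := nullR 2 3 1 ([(3,1), (1,0), (2,1), (4,2), (5,3)]) (by decide) (by decide) adj23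
  have t_e_2 : (μ (evt X ([(3,2), (1,0), (2,1), (4,2), (5,3)] : List (ℤ × Fin 4)))).toReal = 0 := nullR 3 4 2 ([(3,2), (1,0), (2,1), (4,2), (5,3)]) (by decide) (by decide) adj34
  have t_e_3 : (μ (evt X ([(3,3), (1,0), (2,1), (4,2), (5,3)] : List (ℤ × Fin 4)))).toReal = (μ (evt X ([(1,0), (2,1), (3,2), (4,3), (5,2)] : List (ℤ × Fin 4)))).toReal := by
    have q1 := permLR ([(3,3), (1,0), (2,1), (4,2), (5,3)]) ([(1,0), (2,1), (3,3), (4,2), (5,3)]) (by decide)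
    have q2 := permR (Equiv.swap 2 3) ([(1,0), (2,1), (3,2), (4,3), (5,2)]) ([(1,0), (2,1), (3,3), (4,2), (5,3)]) (by decide)
    linarith
  have val_e : (μ (evt X ([(1,0), (2,1), (3,0), (4,2), (5,3)] : List (ℤ × Fin 4)))).toReal = 1/288 := by linarith [bs_e, dec_e, t_e_0, t_e_1, t_e_2, t_e_3, hrNE]
  -- equation f
  have sp_f := splitR2 ([(1,0), (2,1)]) ([(4,0), (5,1)]) (by decide) (by decide)
  have o_f := permLR ([(1,0), (2,1), (4,0), (5,1)]) ([(1,0), (2,1)] ++ [(4,0), (5,1)]) (by decide)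
  have bs_f : (μ (evt X ([(1,0), (2,1), (4,0), (5,1)] : List (ℤ × Fin 4)))).toReal = 1/12 * (1/12) := by rw [o_f, sp_f, hP12, h4501]
  have dec_f := decompR 3 ([(1,0), (2,1), (4,0), (5,1)] : List (ℤ × Fin 4))
  have t_f_0 : (μ (evt X ([(3,0), (1,0), (2,1), (4,0), (5,1)] : List (ℤ × Fin 4)))).toReal = 0 := nullR 3 4 0 ([(3,0), (1,0), (2,1), (4,0), (5,1)]) (by decide) (by decide) adj34
  have t_f_1 : (μ (evt X ([(3,1), (1,0), (2,1), (4,0), (5,1)] : List (ℤ × Fin 4)))).toReal = 0 := nullR 2 3 1 ([(3,1), (1,0), (2,1), (4,0), (5,1)]) (by decide) (by decide) adj23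
  have t_f_2 := permLR ([(3,2), (1,0), (2,1), (4,0), (5,1)]) ([(1,0), (2,1), (3,2), (4,0), (5,1)]) (by decide)
  have t_f_3 : (μ (evt X ([(3,3), (1,0), (2,1), (4,0), (5,1)] : List (ℤ × Fin 4)))).toReal = (μ (evt X ([(1,0), (2,1), (3,2), (4,0), (5,1)] : List (ℤ × Fin 4)))).toReal := by
    have q1 := permLR ([(3,3), (1,0), (2,1), (4,0), (5,1)]) ([(1,0), (2,1), (3,3), (4,0), (5,1)]) (by decide)
    have q2 := permR (Equiv.swap 2 3) ([(1,0), (2,1), (3,2), (4,0), (5,1)]) ([(1,0), (2,1), (3,3), (4,0), (5,1)]) (by decide)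
    linarith
  have val_f : (μ (evt X ([(1,0), (2,1), (3,2), (4,0), (5,1)] : List (ℤ × Fin 4)))).toReal = 1/288 := by linarith [bs_f, dec_f, t_f_0, t_f_1, t_f_2, t_f_3]
  -- equation h
  have sp_h := splitR2 ([(1,0), (2,1)]) ([(4,0), (5,2)]) (by decide) (by decide)
  have o_h := permLR ([(1,0), (2,1), (4,0), (5,2)]) ([(1,0), (2,1)] ++ [(4,0), (5,2)]) (by decide)
  have bs_h : (μ (evt X ([(1,0), (2,1), (4,0), (5,2)] : List (ℤ × Fin 4)))).toReal = 1/12 * (1/12) := by rw [o_h, sp_h, hP12, h4502]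
  have dec_h := decompR 3 ([(1,0), (2,1), (4,0), (5,2)] : List (ℤ × Fin 4))
  have t_h_0 : (μ (evt X ([(3,0), (1,0), (2,1), (4,0), (5,2)] : List (ℤ × Fin 4)))).toReal = 0 := nullR 3 4 0 ([(3,0), (1,0), (2,1), (4,0), (5,2)]) (by decide) (by decide) adj34
  have t_h_1 : (μ (evt X ([(3,1), (1,0), (2,1), (4,0), (5,2)] : List (ℤ × Fin 4)))).toReal = 0 := nullR 2 3 1 ([(3,1), (1,0), (2,1), (4,0), (5,2)]) (by decide) (by decide) adj23
  have t_h_2 := permLR ([(3,2), (1,0), (2,1), (4,0), (5,2)]) ([(1,0), (2,1), (3,2), (4,0), (5,2)]) (by decide)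
  have t_h_3 : (μ (evt X ([(3,3), (1,0), (2,1), (4,0), (5,2)] : List (ℤ × Fin 4)))).toReal = (μ (evt X ([(1,0), (2,1), (3,2), (4,0), (5,3)] : List (ℤ × Fin 4)))).toReal := by
    have q1 := permLR ([(3,3), (1,0), (2,1), (4,0), (5,2)]) ([(1,0), (2,1), (3,3), (4,0), (5,2)]) (by decide)
    have q2 := permR (Equiv.swap 2 3) ([(1,0), (2,1), (3,2), (4,0), (5,3)]) ([(1,0), (2,1), (3,3), (4,0), (5,2)]) (by decide)
    linarith
  have val_h : (μ (evt X ([(1,0), (2,1), (3,2), (4,0), (5,3)] : List (ℤ × Fin 4)))).toReal = 5/1152 := by linarith [bs_h, dec_h, t_h_0, t_h_1, t_h_2, t_h_3, hrGD, val_d]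
  -- equation b
  have sp_b := splitR3 ([(1,0), (2,1), (3,0)]) ([(5,2)]) (by decide) (by decide)
  have o_b := permLR ([(1,0), (2,1), (3,0), (5,2)]) ([(1,0), (2,1), (3,0)] ++ [(5,2)]) (by decide)
  have bs_b : (μ (evt X ([(1,0), (2,1), (3,0), (5,2)] : List (ℤ × Fin 4)))).toReal = 1/48 * (1/4) := by rw [o_b, sp_b, hP121, h52]
  have dec_b := decompR 4 ([(1,0), (2,1), (3,0), (5,2)] : List (ℤ × Fin 4))
  have t_b_0 : (μ (evt X ([(4,0), (1,0), (2,1), (3,0), (5,2)] : List (ℤ × Fin 4)))).toReal = 0 := nullR 3 4 0 ([(4,0), (1,0), (2,1), (3,0), (5,2)]) (by decide) (by decide) adj34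
  have t_b_1 := permLR ([(4,1), (1,0), (2,1), (3,0), (5,2)]) ([(1,0), (2,1), (3,0), (4,1), (5,2)]) (by decide)
  have t_b_2 : (μ (evt X ([(4,2), (1,0), (2,1), (3,0), (5,2)] : List (ℤ × Fin 4)))).toReal = 0 := nullR 4 5 2 ([(4,2), (1,0), (2,1), (3,0), (5,2)]) (by decide) (by decide) adj45
  have t_b_3 : (μ (evt X ([(4,3), (1,0), (2,1), (3,0), (5,2)] : List (ℤ × Fin 4)))).toReal = (μ (evt X ([(1,0), (2,1), (3,0), (4,2), (5,3)] : List (ℤ × Fin 4)))).toReal := by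
    have q1 := permLR ([(4,3), (1,0), (2,1), (3,0), (5,2)]) ([(1,0), (2,1), (3,0), (4,3), (5,2)]) (by decide)
    have q2 := permR (Equiv.swap 2 3) ([(1,0), (2,1), (3,0), (4,2), (5,3)]) ([(1,0), (2,1), (3,0), (4,3), (5,2)]) (by decide)
    linarith
  have val_b : (μ (evt X ([(1,0), (2,1), (3,0), (4,1), (5,2)] : List (ℤ × Fin 4)))).toReal = 1/576 := by linarith [bs_b, dec_b, t_b_0, t_b_1, t_b_2, t_b_3, val_e]
  have hcyl1212 := cyl4 μ X 0 1 0 1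
  have h1212 : (μ (evt X ([(1,0), (2,1), (3,0), (4,1)] : List (ℤ × Fin 4)))).toReal = α/48 := by rw [hcyl1212] at hα; linarith
  have dec_a := decompR 5 ([(1,0), (2,1), (3,0), (4,1)] : List (ℤ × Fin 4))
  have t_a_0 := permLR ([(5,0), (1,0), (2,1), (3,0), (4,1)]) ([(1,0), (2,1), (3,0), (4,1), (5,0)]) (by decide)
  have t_a_1 : (μ (evt X ([(5,1), (1,0), (2,1), (3,0), (4,1)] : List (ℤ × Fin 4)))).toReal = 0 := nullR 4 5 1 ([(5,1), (1,0), (2,1), (3,0), (4,1)]) (by decide) (by decide) adj45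
  have t_a_2 := permLR ([(5,2), (1,0), (2,1), (3,0), (4,1)]) ([(1,0), (2,1), (3,0), (4,1), (5,2)]) (by decide)
  have t_a_3 : (μ (evt X ([(5,3), (1,0), (2,1), (3,0), (4,1)] : List (ℤ × Fin 4)))).toReal = (μ (evt X ([(1,0), (2,1), (3,0), (4,1), (5,2)] : List (ℤ × Fin 4)))).toReal := by
    have q1 := permLR ([(5,3), (1,0), (2,1), (3,0), (4,1)]) ([(1,0), (2,1), (3,0), (4,1), (5,3)]) (by decide)
    have q2 := permR (Equiv.swap 2 3) ([(1,0), (2,1), (3,0), (4,1), (5,2)]) ([(1,0), (2,1), (3,0), (4,1), (5,3)]) (by decide)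
    linarith
  have val_a : (μ (evt X ([(1,0), (2,1), (3,0), (4,1), (5,0)] : List (ℤ × Fin 4)))).toReal = (6 * α - 1)/288 := by linarith [h1212, dec_a, t_a_0, t_a_1, t_a_2, t_a_3, val_b]
  -- equation i
  have sp_i := splitR2 ([(1,0), (2,1)]) ([(4,1), (5,0)]) (by decide) (by decide)
  have o_i := permLR ([(1,0), (2,1), (4,1), (5,0)]) ([(1,0), (2,1)] ++ [(4,1), (5,0)]) (by decide)
  have bs_i : (μ (evt X ([(1,0), (2,1), (4,1), (5,0)] : List (ℤ × Fin 4)))).toReal = 1/12 * (1/12) := by rw [o_i, sp_i, hP12, h4510]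
  have dec_i := decompR 3 ([(1,0), (2,1), (4,1), (5,0)] : List (ℤ × Fin 4))
  have t_i_0 := permLR ([(3,0), (1,0), (2,1), (4,1), (5,0)]) ([(1,0), (2,1), (3,0), (4,1), (5,0)]) (by decide)
  have t_i_1 : (μ (evt X ([(3,1), (1,0), (2,1), (4,1), (5,0)] : List (ℤ × Fin 4)))).toReal = 0 := nullR 2 3 1 ([(3,1), (1,0), (2,1), (4,1), (5,0)]) (by decide) (by decide) adj23
  have t_i_2 := permLR ([(3,2), (1,0), (2,1), (4,1), (5,0)]) ([(1,0), (2,1), (3,2), (4,1), (5,0)]) (by decide)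
  have t_i_3 : (μ (evt X ([(3,3), (1,0), (2,1), (4,1), (5,0)] : List (ℤ × Fin 4)))).toReal = (μ (evt X ([(1,0), (2,1), (3,2), (4,1), (5,0)] : List (ℤ × Fin 4)))).toReal := by
    have q1 := permLR ([(3,3), (1,0), (2,1), (4,1), (5,0)]) ([(1,0), (2,1), (3,3), (4,1), (5,0)]) (by decide)
    have q2 := permR (Equiv.swap 2 3) ([(1,0), (2,1), (3,2), (4,1), (5,0)]) ([(1,0), (2,1), (3,3), (4,1), (5,0)]) (by decide)
    linarith
  have val_i : (μ (evt X ([(1,0), (2,1), (3,2), (4,1), (5,0)] : List (ℤ × Fin 4)))).toReal = (1 - 2 * α)/192 := by linarith [bs_i, dec_i, t_i_0, t_i_1, t_i_2, t_i_3, val_a]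
  -- equation k
  have sp_k := splitR2 ([(1,0), (2,1)]) ([(4,1), (5,2)]) (by decide) (by decide)
  have o_k := permLR ([(1,0), (2,1), (4,1), (5,2)]) ([(1,0), (2,1)] ++ [(4,1), (5,2)]) (by decide)
  have bs_k : (μ (evt X ([(1,0), (2,1), (4,1), (5,2)] : List (ℤ × Fin 4)))).toReal = 1/12 * (1/12) := by rw [o_k, sp_k, hP12, h4512]
  have dec_k := decompR 3 ([(1,0), (2,1), (4,1), (5,2)] : List (ℤ × Fin 4))
  have t_k_0 := permLR ([(3,0), (1,0), (2,1), (4,1), (5,2)]) ([(1,0), (2,1), (3,0), (4,1), (5,2)]) (by decide)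
  have t_k_1 : (μ (evt X ([(3,1), (1,0), (2,1), (4,1), (5,2)] : List (ℤ × Fin 4)))).toReal = 0 := nullR 2 3 1 ([(3,1), (1,0), (2,1), (4,1), (5,2)]) (by decide) (by decide) adj23
  have t_k_2 := permLR ([(3,2), (1,0), (2,1), (4,1), (5,2)]) ([(1,0), (2,1), (3,2), (4,1), (5,2)]) (by decide)
  have t_k_3 : (μ (evt X ([(3,3), (1,0), (2,1), (4,1), (5,2)] : List (ℤ × Fin 4)))).toReal = (μ (evt X ([(1,0), (2,1), (3,2), (4,1), (5,3)] : List (ℤ × Fin 4)))).toReal := by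
    have q1 := permLR ([(3,3), (1,0), (2,1), (4,1), (5,2)]) ([(1,0), (2,1), (3,3), (4,1), (5,2)]) (by decide)
    have q2 := permR (Equiv.swap 2 3) ([(1,0), (2,1), (3,2), (4,1), (5,3)]) ([(1,0), (2,1), (3,3), (4,1), (5,2)]) (by decide)
    linarith
  have val_k : (μ (evt X ([(1,0), (2,1), (3,2), (4,1), (5,3)] : List (ℤ × Fin 4)))).toReal = 1/288 := by linarith [bs_k, dec_k, t_k_0, t_k_1, t_k_2, t_k_3, hrJB, val_b]
  -- equation l
  have sp_l := splitR3 ([(1,0), (2,1), (3,2)]) ([(5,0)]) (by decide) (by decide)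
  have o_l := permLR ([(1,0), (2,1), (3,2), (5,0)]) ([(1,0), (2,1), (3,2)] ++ [(5,0)]) (by decide)
  have bs_l : (μ (evt X ([(1,0), (2,1), (3,2), (5,0)] : List (ℤ × Fin 4)))).toReal = 1/32 * (1/4) := by rw [o_l, sp_l, hP123, h50]
  have dec_l := decompR 4 ([(1,0), (2,1), (3,2), (5,0)] : List (ℤ × Fin 4))
  have t_l_0 : (μ (evt X ([(4,0), (1,0), (2,1), (3,2), (5,0)] : List (ℤ × Fin 4)))).toReal = 0 := nullR 4 5 0 ([(4,0), (1,0), (2,1), (3,2), (5,0)]) (by decide) (by decide) adj45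
  have t_l_1 := permLR ([(4,1), (1,0), (2,1), (3,2), (5,0)]) ([(1,0), (2,1), (3,2), (4,1), (5,0)]) (by decide)
  have t_l_2 : (μ (evt X ([(4,2), (1,0), (2,1), (3,2), (5,0)] : List (ℤ × Fin 4)))).toReal = 0 := nullR 3 4 2 ([(4,2), (1,0), (2,1), (3,2), (5,0)]) (by decide) (by decide) adj34
  have t_l_3 := permLR ([(4,3), (1,0), (2,1), (3,2), (5,0)]) ([(1,0), (2,1), (3,2), (4,3), (5,0)]) (by decide)
  have val_l : (μ (evt X ([(1,0), (2,1), (3,2), (4,3), (5,0)] : List (ℤ × Fin 4)))).toReal = (1 + 4 * α)/384 := by linarith [bs_l, dec_l, t_l_0, t_l_1, t_l_2, t_l_3, val_i]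
  -- equation c
  have sp_c := splitR2 ([(1,0), (2,1)]) ([(4,2), (5,0)]) (by decide) (by decide)
  have o_c := permLR ([(1,0), (2,1), (4,2), (5,0)]) ([(1,0), (2,1)] ++ [(4,2), (5,0)]) (by decide)
  have bs_c : (μ (evt X ([(1,0), (2,1), (4,2), (5,0)] : List (ℤ × Fin 4)))).toReal = 1/12 * (1/12) := by rw [o_c, sp_c, hP12, h4520]
  have dec_c := decompR 3 ([(1,0), (2,1), (4,2), (5,0)] : List (ℤ × Fin 4))
  have t_c_0 := permLR ([(3,0), (1,0), (2,1), (4,2), (5,0)]) ([(1,0), (2,1), (3,0), (4,2), (5,0)]) (by decide)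
  have t_c_1 : (μ (evt X ([(3,1), (1,0), (2,1), (4,2), (5,0)] : List (ℤ × Fin 4)))).toReal = 0 := nullR 2 3 1 ([(3,1), (1,0), (2,1), (4,2), (5,0)]) (by decide) (by decide) adj23
  have t_c_2 : (μ (evt X ([(3,2), (1,0), (2,1), (4,2), (5,0)] : List (ℤ × Fin 4)))).toReal = 0 := nullR 3 4 2 ([(3,2), (1,0), (2,1), (4,2), (5,0)]) (by decide) (by decide) adj34
  have t_c_3 : (μ (evt X ([(3,3), (1,0), (2,1), (4,2), (5,0)] : List (ℤ × Fin 4)))).toReal = (μ (evt X ([(1,0), (2,1), (3,2), (4,3), (5,0)] : List (ℤ × Fin 4)))).toReal := by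
    have q1 := permLR ([(3,3), (1,0), (2,1), (4,2), (5,0)]) ([(1,0), (2,1), (3,3), (4,2), (5,0)]) (by decide)
    have q2 := permR (Equiv.swap 2 3) ([(1,0), (2,1), (3,2), (4,3), (5,0)]) ([(1,0), (2,1), (3,3), (4,2), (5,0)]) (by decide)
    linarith
  have val_c : (μ (evt X ([(1,0), (2,1), (3,0), (4,2), (5,0)] : List (ℤ × Fin 4)))).toReal = (5 - 12 * α)/1152 := by linarith [bs_c, dec_c, t_c_0, t_c_1, t_c_2, t_c_3, val_l]
  refine ⟨?_, ?_, ?_, ?_, ?_, ?_, ?_, ?_, ?_, ?_⟩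
  · rw [cyl5 μ X 0 1 0 2 3]
    exact val_e
  · rw [cyl5 μ X 0 1 2 0 3]
    exact val_h
  · rw [cyl5 μ X 0 1 2 1 3]
    exact val_k
  · rw [cyl5 μ X 0 1 2 3 0]
    exact val_l
  · rw [cyl5 μ X 0 1 0 2 0]
    exact val_c
  · rw [cyl5 μ X 0 1 0 1 2]
    exact val_b
  · rw [cyl5 μ X 0 1 0 2 1]
    exact val_d
  · rw [cyl5 μ X 0 1 2 0 1]
    exact val_f
  · rw [cyl5 μ X 0 1 2 1 0]
    exact val_i
  · rw [cyl5 μ X 0 1 0 1 0]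
    exact val_a
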